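/- Deleting a letter from a cyclic word over the alphabet {0, 1} does not increase the number of cyclic positions i at which w(i) = 0 and w(i+1) = 1 (indices mod length). -/

import Mathlib

/-- The transition count of a cyclic word `w : Fin n → Fin 2`: the number of
cyclic positions `i` with `w i = 0` and `w (i+1) = 1` (addition in `Fin n` is
cyclic, i.e. indices mod the length). -/
def transitionCount {n : ℕ} [NeZero n] (w : Fin n → Fin 2) : ℕ :=
  (Finset.univ.filter fun i : Fin n => w i = 0 ∧ w (i + 1) = 1).card

private lemma key12 (n : ℕ) (j : Fin (n+2)) (i : Fin (n+1)) :
    (j.succAbove i + 1 ≠ j ∧ j.succAbove (i+1) = j.succAbove i + 1) ∨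
    (j.succAbove i + 1 = j ∧ j.succAbove (i+1) = j.succAbove i + 1 + 1) := by
  have hadd2 : ∀ x : Fin (n+2), ((x+1 : Fin (n+2))).val = if x.val = n+1 then 0 else x.val+1 := by
    intro x; rw [Fin.val_add_one]; simp [Fin.ext_iff]
  have h1 : ((i+1 : Fin (n+1))).val = if i.val = n then 0 else i.val+1 := by
    rw [Fin.val_add_one]; simp [Fin.ext_iff]
  have hi := i.isLt
  have hj := j.isLt
  rw [Fin.succAbove, Fin.succAbove]
  split_ifs with c1 c2 c2 <;>
    simp only [ne_eq, Fin.ext_iff, hadd2, Fin.coe_castSucc, Fin.val_succ, h1, Fin.lt_def] at c1 c2 ⊢ <;>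
    clear hadd2 h1 <;>
    split_ifs at * <;> omega

/-- Deleting one letter (at position `j`, the remaining letters indexed in
cyclic order via `Fin.succAbove j`) from a cyclic word over `{0, 1}` of length
`n + 2` does not increase the number of cyclic `0`-to-`1` transitions. -/
theorem stmt12 (n : ℕ) (w : Fin (n + 2) → Fin 2) (j : Fin (n + 2)) :
    transitionCount (w ∘ j.succAbove) ≤ transitionCount w := by
  classical
  rw [transitionCount, transitionCount]
  apply Finset.card_le_card_of_injOn
    (fun i => if w j = 0 ∧ j.succAbove i + 1 = j then j else j.succAbove i)
  · intro i hi
    simp only [Finset.mem_coe, Finset.mem_filter, Finset.mem_univ, true_and, Function.comp_apply] at hi ⊢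
    obtain ⟨h0, h1⟩ := hi
    rcases key12 n j i with ⟨hne, heq⟩ | ⟨hj, heq⟩
    · rw [if_neg (by tauto)]
      exact ⟨h0, by rw [← heq]; exact h1⟩
    · by_cases hwj : w j = 0
      · rw [if_pos ⟨hwj, hj⟩]
        refine ⟨hwj, ?_⟩
        have hjj : j + 1 = j.succAbove (i+1) := by rw [heq, hj]
        rw [hjj]; exact h1
      · rw [if_neg (by tauto)]
        refine ⟨h0, ?_⟩
        rw [hj]
        have : w j = 1 := by omega
        exact this
  · intro a _ b _ hab
    simp only at hab
    by_cases ca : w j = 0 ∧ j.succAbove a + 1 = j <;>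
      by_cases cb : w j = 0 ∧ j.succAbove b + 1 = j
    · apply Fin.succAbove_right_injective (p := j)
      have := ca.2.trans cb.2.symm
      exact add_right_cancel this
    · rw [if_pos ca, if_neg cb] at hab
      exact absurd hab.symm (Fin.succAbove_ne j b)
    · rw [if_neg ca, if_pos cb] at hab
      exact absurd hab (Fin.succAbove_ne j a)
    · rw [if_neg ca, if_neg cb] at hab
      exact Fin.succAbove_right_injective hab
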